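/- Let n be a positive integer and let A be the subring of ℤⁿ (with componentwise operations) consisting of all tuples (a_1, …, a_n) such that a_i ≡ a_j (mod 2) for all i, j. Then A is connected, i.e., its only idempotents are 0 = (0,…,0) and 1 = (1,…,1); moreover the unit group of A is exactly the set of tuples with every entry equal to 1 or −1, so that A has exactly 2ⁿ units, each of which is a root of unity. -/

import Mathlib

/-- The subring `A ⊆ ℤⁿ` of tuples all of whose entries are congruent mod `2`. -/
def congrSubring (n : ℕ) : Subring (Fin n → ℤ) where
  carrier := {a | ∀ i j : Fin n, a i ≡ a j [ZMOD 2]}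
  add_mem' := fun ha hb i j => (ha i j).add (hb i j)
  mul_mem' := fun ha hb i j => (ha i j).mul (hb i j)
  neg_mem' := fun ha i j => (ha i j).neg
  zero_mem' := fun _ _ => Int.ModEq.refl 0
  one_mem' := fun _ _ => Int.ModEq.refl 1

lemma congrSubring.mem_of_pm (n : ℕ) (a : Fin n → ℤ)
    (h : ∀ i, a i = 1 ∨ a i = -1) : a ∈ congrSubring n := by
  intro i j
  rcases h i with hi | hi <;> rcases h j with hj | hj <;> rw [hi, hj] <;> decide

lemma congrSubring.sq_eq_one (n : ℕ) (a : congrSubring n)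
    (h : ∀ i, (a : Fin n → ℤ) i = 1 ∨ (a : Fin n → ℤ) i = -1) : a * a = 1 := by
  apply Subtype.ext
  funext i
  have : ((a * a : congrSubring n) : Fin n → ℤ) i = (a : Fin n → ℤ) i * (a : Fin n → ℤ) i := rfl
  rw [this]
  rcases h i with hi | hi <;> rw [hi] <;> norm_num

lemma congrSubring.unit_iff (n : ℕ) (a : congrSubring n) :
    IsUnit a ↔ ∀ i : Fin n, (a : Fin n → ℤ) i = 1 ∨ (a : Fin n → ℤ) i = -1 := by
  constructor
  · rintro ⟨u, rfl⟩ i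
    have h := congrArg (fun x : congrSubring n => (x : Fin n → ℤ) i) u.mul_inv
    have h' : ((u.val : congrSubring n) : Fin n → ℤ) i * ((u.inv : congrSubring n) : Fin n → ℤ) i = 1 := h
    have := Int.isUnit_iff.mp (IsUnit.of_mul_eq_one _ h')
    exact this
  · intro h
    exact ⟨⟨a, a, congrSubring.sq_eq_one n a h, congrSubring.sq_eq_one n a h⟩, rfl⟩

/-- Bool tuples to units. -/
noncomputable def congrSubring.unitOf (n : ℕ) (b : Fin n → Bool) : (congrSubring n)ˣ := by
  refine (congrSubring.unit_iff n ⟨fun i => if b i then 1 else -1, ?_⟩).mpr ?_ |>.unit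
  · exact congrSubring.mem_of_pm n _ (fun i => by by_cases h : b i <;> simp [h])
  · intro i; by_cases h : b i <;> simp [h]

theorem stmt_19 (n : ℕ) (hn : 0 < n) :
    (∀ e : congrSubring n, e * e = e → e = 0 ∨ e = 1) ∧
    (∀ a : congrSubring n, IsUnit a ↔
      ∀ i : Fin n, (a : Fin n → ℤ) i = 1 ∨ (a : Fin n → ℤ) i = -1) ∧
    Nat.card (congrSubring n)ˣ = 2 ^ n ∧
    (∀ u : (congrSubring n)ˣ, IsOfFinOrder u) := by
  refine ⟨?_, congrSubring.unit_iff n, ?_, ?_⟩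
  · intro e he
    have hent : ∀ i, (e : Fin n → ℤ) i = 0 ∨ (e : Fin n → ℤ) i = 1 := by
      intro i
      have h := congrArg (fun x : congrSubring n => (x : Fin n → ℤ) i) he
      have h' : (e : Fin n → ℤ) i * (e : Fin n → ℤ) i = (e : Fin n → ℤ) i := h
      have : (e : Fin n → ℤ) i * ((e : Fin n → ℤ) i - 1) = 0 := by ring_nf; linarith
      rcases mul_eq_zero.mp this with h0 | h1
      · exact Or.inl h0
      · exact Or.inr (by linarith)
    set i0 : Fin n := ⟨0, hn⟩
    have hmod := e.2
    rcases hent i0 with h0 | h1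
    · left
      apply Subtype.ext; funext i
      rcases hent i with h | h
      · exact h
      · exfalso
        have := hmod i i0
        rw [h, h0] at this
        exact absurd this (by decide)
    · right
      apply Subtype.ext; funext i
      rcases hent i with h | h
      · exfalso
        have := hmod i i0
        rw [h, h1] at this
        exact absurd this (by decide)
      · exact h
  · have hbij : Function.Bijective (congrSubring.unitOf n) := by
      constructor
      · intro b c hbc
        funext i
        have h := congrArg (fun u : (congrSubring n)ˣ => ((u : congrSubring n) : Fin n → ℤ) i) hbc
        simp only [congrSubring.unitOf, IsUnit.unit_spec] at h
        by_cases hb : b i <;> by_cases hc : c i <;> simp_all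
      · intro u
        have h := (congrSubring.unit_iff n u).mp u.isUnit
        refine ⟨fun i => decide ((((u : congrSubring n) : Fin n → ℤ) i) = 1), ?_⟩
        apply Units.ext
        apply Subtype.ext
        funext i
        show (if decide ((((u : congrSubring n) : Fin n → ℤ) i) = 1) = true then (1:ℤ) else -1) = _
        rcases h i with hi | hi <;> rw [hi] <;> simp
    rw [← Nat.card_eq_of_bijective _ hbij]
    simp [Nat.card_eq_fintype_card]
  · intro u
    refine isOfFinOrder_iff_pow_eq_one.mpr ⟨2, two_pos, ?_⟩
    have h := (congrSubring.unit_iff n u).mp u.isUnit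
    apply Units.ext
    rw [pow_two, Units.val_mul]
    exact congrSubring.sq_eq_one n u h
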